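/- arXiv:2604.24879 — 4 statements merged into one kernel-verified Lean document; each statement's English description precedes it below -/
import Mathlib

section
/- (Lemma: one step of the unrestriction algorithm, matrix form.) Let k be a field and let M be an m × n matrix with entries in the formal power series ring k[[t]] such that M has rank m over the field of Laurent series k((t)); equivalently, there is an injection c : {1,…,m} → {1,…,n} such that the determinant of the m × m submatrix of M on the columns c is a nonzero power series. Then there exist an m × m matrix X over k[[t]] and an m × n matrix N over k[[t]] such that M = X · N, det X ≠ 0, and the m × n matrix over k obtained by taking the constant coefficient of every entry of N has rank m. -/
/-!
Statement 5: one step of the unrestriction algorithm, matrix form.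
-/

namespace Stmt5

/-- The constant-term matrix of a matrix over `k[[t]]`. -/
noncomputable def constantTermMatrix {k : Type*} [Field k] {m n : ℕ}
    (N : Matrix (Fin m) (Fin n) (PowerSeries k)) : Matrix (Fin m) (Fin n) k :=
  N.map fun p => PowerSeries.constantCoeff p

open PowerSeries in
/-- One reduction step: if the constant-term rows of `M` are linearly dependent, we can
factor `M = E * N` where `det E` has order exactly `1` and the chosen submatrix
determinant of `N` has order one less than that of `M`. -/
lemma step {k : Type*} [Field k] {m n : ℕ}
    (M : Matrix (Fin m) (Fin n) (PowerSeries k)) (c : Fin m → Fin n)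
    (h : ¬ LinearIndependent k (fun i => constantTermMatrix M i)) :
    ∃ (E : Matrix (Fin m) (Fin m) (PowerSeries k))
      (N : Matrix (Fin m) (Fin n) (PowerSeries k)),
      M = E * N ∧ E.det.order = 1 ∧
      (M.submatrix id c).det = E.det * (N.submatrix id c).det := by
  classical
  obtain ⟨g, hg0, i0, hgi0⟩ := Fintype.not_linearIndependent_iff.mp h
  set a : k := (g i0)⁻¹ with ha_def
  have ha : a ≠ 0 := inv_ne_zero hgi0
  -- the linear combination of the rows of `M`
  set S : Fin n → PowerSeries k := fun q => ∑ j, PowerSeries.C (g j) * M j q with hS_def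
  have hS0 : ∀ q, constantCoeff (S q) = 0 := by
    intro q
    have h1 : (∑ j, g j • constantTermMatrix M j) q = 0 := by rw [hg0]; rfl
    have h2 : ∑ j, g j * constantTermMatrix M j q = 0 := by
      simpa [Finset.sum_apply] using h1
    simp only [hS_def, map_sum, map_mul, constantCoeff_C]
    simpa [constantTermMatrix] using h2
  have hdvd : ∀ q, ∃ r, S q = PowerSeries.X * r := fun q =>
    (PowerSeries.X_dvd_iff.mpr (hS0 q))
  set Nr : Fin n → PowerSeries k := fun q => (hdvd q).choose with hNr_def
  have hNr : ∀ q, S q = PowerSeries.X * Nr q := fun q => (hdvd q).choose_spec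
  set N : Matrix (Fin m) (Fin n) (PowerSeries k) := M.updateRow i0 Nr with hN_def
  set w : Fin m → PowerSeries k := fun j =>
    if j = i0 then PowerSeries.C a * PowerSeries.X else - PowerSeries.C (a * g j)
    with hw_def
  set E : Matrix (Fin m) (Fin m) (PowerSeries k) :=
    (1 : Matrix (Fin m) (Fin m) (PowerSeries k)).updateRow i0 w with hE_def
  have hw_sum : w = ∑ j, w j • (1 : Matrix (Fin m) (Fin m) (PowerSeries k)) j := by
    funext q
    simp [Finset.sum_apply, Matrix.one_apply, mul_ite, mul_one, mul_zero,
      Finset.sum_ite_eq']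
  have hdetE : E.det = PowerSeries.C a * PowerSeries.X := by
    have := Matrix.det_updateRow_sum (1 : Matrix (Fin m) (Fin m) (PowerSeries k)) i0 w
    rw [hE_def, hw_sum, this, Matrix.det_one, smul_eq_mul, mul_one]
    simp [hw_def]
  have hEi0 : ∀ j, E i0 j = w j := fun j => by
    rw [hE_def, Matrix.updateRow_self]
  have hErow : ∀ i, i ≠ i0 → ∀ j, E i j = if i = j then 1 else 0 := by
    intro i hi j
    rw [hE_def, Matrix.updateRow_ne hi, Matrix.one_apply]
  have hMEN : M = E * N := by
    refine Matrix.ext fun i q => ?_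
    rw [Matrix.mul_apply]
    by_cases hi : i = i0
    · subst hi
      rw [← Finset.add_sum_erase Finset.univ _ (Finset.mem_univ i)]
      have hterm : ∀ j ∈ Finset.univ.erase i,
          E i j * N j q = -(PowerSeries.C a * (PowerSeries.C (g j) * M j q)) := by
        intro j hj
        have hj' : j ≠ i := Finset.ne_of_mem_erase hj
        rw [hEi0, hN_def, Matrix.updateRow_ne hj', hw_def]
        simp only [if_neg hj', map_mul]
        ring
      rw [Finset.sum_congr rfl hterm, hEi0, hw_def]
      simp only [if_pos rfl, if_true]
      have hNi0 : N i q = Nr q := by rw [hN_def, Matrix.updateRow_self]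
      rw [hNi0, Finset.sum_neg_distrib, ← Finset.mul_sum, mul_assoc, ← hNr q]
      have hsplit : S q = PowerSeries.C (g i) * M i q +
          ∑ j ∈ Finset.univ.erase i, PowerSeries.C (g j) * M j q :=
        (Finset.add_sum_erase Finset.univ
          (fun j => PowerSeries.C (g j) * M j q) (Finset.mem_univ i)).symm
      rw [hsplit]
      symm
      have hCa : PowerSeries.C a * PowerSeries.C (g i) = 1 := by
        rw [← map_mul, ha_def, inv_mul_cancel₀ hgi0, map_one]
      calc PowerSeries.C a * (PowerSeries.C (g i) * M i q +
              ∑ j ∈ Finset.univ.erase i, PowerSeries.C (g j) * M j q) +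
            -(PowerSeries.C a * ∑ j ∈ Finset.univ.erase i,
              PowerSeries.C (g j) * M j q)
          = (PowerSeries.C a * PowerSeries.C (g i)) * M i q := by ring
        _ = M i q := by rw [hCa, one_mul]
    · simp only [hErow i hi, ite_mul, one_mul, zero_mul, Finset.sum_ite_eq,
        Finset.mem_univ, if_pos]
      rw [hN_def, Matrix.updateRow_ne hi]
  have hordE : E.det.order = 1 := by
    rw [hdetE, PowerSeries.order_mul, PowerSeries.order_X]
    have : (PowerSeries.C a).order = 0 :=
      le_antisymm (PowerSeries.order_le 0 (by simpa using ha)) zero_le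
    rw [this, zero_add]
  refine ⟨E, N, hMEN, hordE, ?_⟩
  have hsub : M.submatrix id c = E * (N.submatrix id c) := by
    rw [hMEN]
    refine Matrix.ext fun i q => ?_
    simp [Matrix.mul_apply]
  rw [hsub, Matrix.det_mul]

open PowerSeries in
lemma aux {k : Type*} [Field k] {m n : ℕ} (d : ℕ) :
    ∀ (M : Matrix (Fin m) (Fin n) (PowerSeries k)) (c : Fin m → Fin n),
      (M.submatrix id c).det ≠ 0 → (M.submatrix id c).det.order ≤ (d : ℕ∞) →
      ∃ (X : Matrix (Fin m) (Fin m) (PowerSeries k))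
        (N : Matrix (Fin m) (Fin n) (PowerSeries k)),
        M = X * N ∧ X.det ≠ 0 ∧ (constantTermMatrix N).rank = m := by
  induction d with
  | zero =>
    intro M c hdet hord
    by_cases h : LinearIndependent k (fun i => constantTermMatrix M i)
    · refine ⟨1, M, (Matrix.one_mul M).symm, by simp, ?_⟩
      exact h.rank_matrix.trans (Fintype.card_fin m)
    · exfalso
      obtain ⟨E, N, hEN, hordE, hdet_eq⟩ := step M c h
      have h1 : (M.submatrix id c).det.order
          = 1 + (N.submatrix id c).det.order := by
        rw [hdet_eq, PowerSeries.order_mul, hordE]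
      rw [h1] at hord
      exact absurd (le_trans le_self_add hord) (by simp)
  | succ d ih =>
    intro M c hdet hord
    by_cases h : LinearIndependent k (fun i => constantTermMatrix M i)
    · refine ⟨1, M, (Matrix.one_mul M).symm, by simp, ?_⟩
      exact h.rank_matrix.trans (Fintype.card_fin m)
    · obtain ⟨E, N, hEN, hordE, hdet_eq⟩ := step M c h
      have hE0 : E.det ≠ 0 := by
        intro hz
        rw [hz, PowerSeries.order_zero] at hordE
        exact (by simp : (⊤ : ℕ∞) ≠ 1) hordE
      have hdetN : (N.submatrix id c).det ≠ 0 := by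
        intro hz
        exact hdet (by rw [hdet_eq, hz, mul_zero])
      have hordN : (N.submatrix id c).det.order ≤ (d : ℕ∞) := by
        rw [hdet_eq, PowerSeries.order_mul, hordE] at hord
        have hcast : ((d + 1 : ℕ) : ℕ∞) = (d : ℕ∞) + 1 := by push_cast; ring
        rw [hcast, add_comm (1 : ℕ∞)] at hord
        exact (ENat.add_le_add_iff_right ENat.one_ne_top).mp hord
      obtain ⟨X', N', h1, h2, h3⟩ := ih N c hdetN hordN
      exact ⟨E * X', N', by rw [hEN, h1, Matrix.mul_assoc],
        by rw [Matrix.det_mul]; exact mul_ne_zero hE0 h2, h3⟩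

/-- **One step of the unrestriction algorithm.** If an `m × n` matrix `M` over `k[[t]]`
has an injective choice of `m` columns whose determinant is a nonzero power series (i.e.
`M` has rank `m` over `k((t))`), then `M = X · N` with `X` an `m × m` matrix with
`det X ≠ 0` and `N` an `m × n` matrix whose constant-term matrix has rank `m`. -/
theorem one_step_unrestriction
    (k : Type*) [Field k] (m n : ℕ)
    (M : Matrix (Fin m) (Fin n) (PowerSeries k))
    (c : Fin m → Fin n) (hc : Function.Injective c)
    (hdet : (M.submatrix id c).det ≠ 0) :
    ∃ (X : Matrix (Fin m) (Fin m) (PowerSeries k))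
      (N : Matrix (Fin m) (Fin n) (PowerSeries k)),
      M = X * N ∧ X.det ≠ 0 ∧ (constantTermMatrix N).rank = m := by
  have hfin : (M.submatrix id c).det.order ≠ ⊤ :=
    (PowerSeries.order_finite_iff_ne_zero.mpr hdet).ne
  obtain ⟨d, hd⟩ := WithTop.ne_top_iff_exists.mp hfin
  exact aux d M c hdet hd.ge

end Stmt5
end

section
/- (Uniqueness of one-step unrestrictions up to GL, matrix form.) Let k be a field and m ≤ n. Suppose X and X' are m × m matrices over k[[t]] with det X ≠ 0 and det X' ≠ 0, and N and N' are m × n matrices over k[[t]] whose constant-term matrices over k both have rank m, and suppose X · N = X' · N'. Then there exists an m × m matrix G over k[[t]] whose determinant is a unit of k[[t]] (i.e. has nonzero constant coefficient) such that X' = X · G and N = G · N'. -/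
/-!
Statement 6: uniqueness of one-step unrestrictions up to `GL`, matrix form.
-/

namespace Stmt6

/-- The constant-term matrix of a matrix over `k[[t]]`. -/
noncomputable def constantTermMatrix {k : Type*} [Field k] {m n : ℕ}
    (N : Matrix (Fin m) (Fin n) (PowerSeries k)) : Matrix (Fin m) (Fin n) k :=
  N.map fun p => PowerSeries.constantCoeff p

/-- A matrix of full row rank has `m` columns forming a nonsingular square submatrix. -/
lemma exists_good {k : Type*} [Field k] {m n : ℕ} (A : Matrix (Fin m) (Fin n) k)
    (h : A.rank = m) : ∃ φ : Fin m → Fin n, (A.submatrix id φ).det ≠ 0 := by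
  have hspan : Submodule.span k (Set.range A.transpose) = ⊤ := by
    rw [Matrix.rank_eq_finrank_span_cols] at h
    exact Submodule.eq_top_of_finrank_eq (by simpa using (show Module.finrank k (Submodule.span k (Set.range A.transpose)) = m from h))
  obtain ⟨s, hs_sub, hs_span, hs_li⟩ := exists_linearIndependent k (Set.range A.transpose)
  rw [hspan] at hs_span
  have hs_span' : ⊤ ≤ Submodule.span k (Set.range (Subtype.val : s → (Fin m → k))) := by
    rw [Subtype.range_coe, hs_span]
  let b : Module.Basis s k (Fin m → k) := Module.Basis.mk hs_li hs_span'
  let e : Fin m ≃ s := (b.indexEquiv (Pi.basisFun k (Fin m))).symm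
  have hchoice : ∀ x : s, ∃ j : Fin n, A.transpose j = (x : Fin m → k) := fun x => hs_sub x.2
  choose f hf using hchoice
  refine ⟨fun i => f (e i), fun hdet => ?_⟩
  have hli : LinearIndependent k fun i : Fin m => (A.submatrix id (fun i => f (e i))).transpose i := by
    have : (fun i : Fin m => (A.submatrix id (fun i => f (e i))).transpose i)
        = fun i : Fin m => ((e i : s) : Fin m → k) := by
      funext i
      rw [← hf (e i)]
      rfl
    rw [this]
    exact hs_li.comp (fun i => e i) e.injective
  rw [show (fun i : Fin m => (A.submatrix id (fun i => f (e i))).transpose i) = (A.submatrix id (fun i => f (e i))).col from rfl, Matrix.linearIndependent_cols_iff_isUnit] at hli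
  rw [Matrix.isUnit_iff_isUnit_det, isUnit_iff_ne_zero] at hli
  exact hli hdet

lemma mul_submatrix_eq {R : Type*} [CommRing R] {m n : ℕ} (X : Matrix (Fin m) (Fin m) R)
    (N : Matrix (Fin m) (Fin n) R) (φ : Fin m → Fin n) :
    (X * N).submatrix id φ = X * N.submatrix id φ := by
  ext i j
  simp [Matrix.mul_apply]

lemma const_det_ne {k : Type*} [Field k] {m n : ℕ}
    (N : Matrix (Fin m) (Fin n) (PowerSeries k)) (φ : Fin m → Fin n)
    (h : ((constantTermMatrix N).submatrix id φ).det ≠ 0) :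
    PowerSeries.constantCoeff (N.submatrix id φ).det ≠ 0 := by
  have : (constantTermMatrix N).submatrix id φ
      = (N.submatrix id φ).map (PowerSeries.constantCoeff) := rfl
  rw [RingHom.map_det, RingHom.mapMatrix_apply]
  rw [this] at h
  exact h

/-- **Uniqueness of one-step unrestrictions up to `GL`.** If `X · N = X' · N'` with
`det X, det X' ≠ 0` and the constant-term matrices of `N` and `N'` of rank `m`, then
`X' = X · G` and `N = G · N'` for some matrix `G` over `k[[t]]` whose determinant is a
unit of `k[[t]]`, i.e. has nonzero constant coefficient. -/
theorem one_step_unrestriction_unique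
    (k : Type*) [Field k] (m n : ℕ) (hmn : m ≤ n)
    (X X' : Matrix (Fin m) (Fin m) (PowerSeries k))
    (N N' : Matrix (Fin m) (Fin n) (PowerSeries k))
    (hX : X.det ≠ 0) (hX' : X'.det ≠ 0)
    (hN : (constantTermMatrix N).rank = m)
    (hN' : (constantTermMatrix N').rank = m)
    (h : X * N = X' * N') :
    ∃ G : Matrix (Fin m) (Fin m) (PowerSeries k),
      PowerSeries.constantCoeff G.det ≠ 0 ∧ X' = X * G ∧ N = G * N' := by
  obtain ⟨φ', hφ'⟩ := exists_good _ hN'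
  set M' := N'.submatrix id φ' with hM'
  have hU' : IsUnit M'.det := by
    rw [PowerSeries.isUnit_iff_constantCoeff]
    exact isUnit_iff_ne_zero.mpr (const_det_ne N' φ' hφ')
  set G := N.submatrix id φ' * M'⁻¹ with hG
  have key : X * G = X' := by
    have h1 : X * N.submatrix id φ' = X' * M' := by
      rw [← mul_submatrix_eq, h, mul_submatrix_eq]
    calc X * G = X * N.submatrix id φ' * M'⁻¹ := by rw [hG, Matrix.mul_assoc]
      _ = X' * M' * M'⁻¹ := by rw [h1]
      _ = X' := by rw [Matrix.mul_assoc, Matrix.mul_nonsing_inv _ hU', Matrix.mul_one]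
  have hNG : N = G * N' := by
    have h2 : X * N = X * (G * N') := by
      rw [← Matrix.mul_assoc, key, h]
    have h3 : X.det • N = X.det • (G * N') := by
      calc X.det • N = X.adjugate * (X * N) := by
            rw [← Matrix.mul_assoc, Matrix.adjugate_mul, Matrix.smul_mul, Matrix.one_mul]
        _ = X.adjugate * (X * (G * N')) := by rw [h2]
        _ = X.det • (G * N') := by
            rw [← Matrix.mul_assoc, Matrix.adjugate_mul, Matrix.smul_mul, Matrix.one_mul]
    refine Matrix.ext fun i j => ?_
    have := congrFun (congrFun h3 i) j
    simp only [Matrix.smul_apply, smul_eq_mul] at this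
    exact mul_left_cancel₀ hX this
  refine ⟨G, ?_, key.symm, hNG⟩
  obtain ⟨φ, hφ⟩ := exists_good _ hN
  have h4 : N.submatrix id φ = G * N'.submatrix id φ := by
    rw [hNG, mul_submatrix_eq]
  have h5 : PowerSeries.constantCoeff (N.submatrix id φ).det ≠ 0 :=
    const_det_ne N φ hφ
  rw [h4, Matrix.det_mul, map_mul] at h5
  exact fun hc => h5 (by rw [hc, zero_mul])

end Stmt6
end

section
/- (Proposition: genericity conditions via the centroid.) Let k be a field, d ≥ 3, and W_1,…,W_d k-vector spaces each of dimension m ≥ 1. Let T : W_1^∨ × ⋯ × W_d^∨ → k be a concise multilinear map with dim_k Cen(T) ≥ m. Fix an index i ∈ {1,…,d} and a functional α ∈ W_i^∨. Then the following are equivalent: (1) for some index j ≠ i, the contraction at α is injective in slot j, i.e. the only β ∈ W_j^∨ such that T(γ) = 0 for every tuple γ with γ_i = α and γ_j = β is β = 0; (2) the same holds for every index j ≠ i; (3) the k-linear map Cen(T) → W_i^∨ sending a tuple (X_1,…,X_d) to α ∘ X_i is surjective. Moreover, if these conditions hold, then dim_k Cen(T) = m and the map in (3) is bijective. -/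
/-!
Statement 12: genericity conditions via the centroid.
-/

open scoped BigOperators

namespace Stmt12

variable {k : Type*} [Field k] {d : ℕ} {W : Fin d → Type*}
  [∀ i, AddCommGroup (W i)] [∀ i, Module k (W i)]

/-- The centroid of a multilinear map `T : W₁^∨ × ⋯ × W_d^∨ → k`: the subspace of tuples
`X = (X₁,…,X_d)` of endomorphisms with `X_i ∘_i T = X_j ∘_j T` for all `i, j`, where
`X_i ∘_i T` is `T` with the `i`-th argument `α_i` replaced by `α_i ∘ X_i`. -/
def centroid (T : MultilinearMap k (fun i : Fin d => Module.Dual k (W i)) k) :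
    Submodule k (∀ i, W i →ₗ[k] W i) where
  carrier := {X | ∀ (i j : Fin d) (α : ∀ l : Fin d, Module.Dual k (W l)),
    T (Function.update α i ((X i).dualMap (α i))) =
      T (Function.update α j ((X j).dualMap (α j)))}
  add_mem' := by
    intro X Y hX hY i j α
    have h : ∀ l : Fin d, ((X + Y) l).dualMap (α l)
        = (X l).dualMap (α l) + (Y l).dualMap (α l) := by
      intro l; ext w; simp [LinearMap.dualMap_apply]
    rw [h i, h j, T.map_update_add, T.map_update_add, hX i j α, hY i j α]
  zero_mem' := by
    intro i j α
    have h : ∀ l : Fin d, ((0 : ∀ i, W i →ₗ[k] W i) l).dualMap (α l) = 0 := by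
      intro l; ext w; simp [LinearMap.dualMap_apply]
    rw [h i, h j,
      T.map_coord_zero (m := Function.update α i 0) i (Function.update_self i 0 α),
      T.map_coord_zero (m := Function.update α j 0) j (Function.update_self j 0 α)]
  smul_mem' := by
    intro c X hX i j α
    have h : ∀ l : Fin d, ((c • X) l).dualMap (α l) = c • (X l).dualMap (α l) := by
      intro l; ext w; simp [LinearMap.dualMap_apply]
    rw [h i, h j, T.map_update_smul, T.map_update_smul, hX i j α]

/-- Conciseness in slot `i`. -/
def ConciseIn (T : MultilinearMap k (fun i : Fin d => Module.Dual k (W i)) k)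
    (i : Fin d) : Prop :=
  ∀ α : Module.Dual k (W i),
    (∀ γ : ∀ l : Fin d, Module.Dual k (W l), γ i = α → T γ = 0) → α = 0

/-- Conciseness in every slot. -/
def Concise (T : MultilinearMap k (fun i : Fin d => Module.Dual k (W i)) k) : Prop :=
  ∀ i : Fin d, ConciseIn T i

/-- Injectivity of the contraction of `T` at `α ∈ W_i^∨` in slot `j`: the only
`β ∈ W_j^∨` such that `T γ = 0` for every tuple `γ` with `γ i = α` and `γ j = β` is
`β = 0`. -/
def ContractionInjAt (T : MultilinearMap k (fun i : Fin d => Module.Dual k (W i)) k)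
    (i : Fin d) (α : Module.Dual k (W i)) (j : Fin d) : Prop :=
  ∀ β : Module.Dual k (W j),
    (∀ γ : ∀ l : Fin d, Module.Dual k (W l), γ i = α → γ j = β → T γ = 0) → β = 0

theorem exists_third (hd : 3 ≤ d) (i j : Fin d) : ∃ l : Fin d, l ≠ i ∧ l ≠ j := by
  by_contra h
  push_neg at h
  have hsub : (Finset.univ : Finset (Fin d)) ⊆ {i, j} := by
    intro l _
    by_cases hli : l = i
    · simp [hli]
    · simp [h l hli]
  have h1 := Finset.card_le_card hsub
  have h2 : ({i, j} : Finset (Fin d)).card ≤ 2 :=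
    (Finset.card_insert_le _ _).trans (by simp)
  simp only [Finset.card_univ, Fintype.card_fin] at h1
  omega

theorem endo_eq_zero {V : Type*} [AddCommGroup V] [Module k V] {f : V →ₗ[k] V}
    (h : ∀ β : Module.Dual k V, f.dualMap β = 0) : f = 0 := by
  ext w
  have h' : ∀ φ : Module.Dual k V, φ (f w) = 0 := fun φ => by
    simpa using congrArg (fun g => g w) (h φ)
  simpa using (Module.forall_dual_apply_eq_zero_iff k (f w)).mp h'

/-- If some component of a centroid element vanishes, the whole element vanishes
(for concise `T`). -/
theorem eq_zero_of_slot_zero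
    (T : MultilinearMap k (fun i : Fin d => Module.Dual k (W i)) k)
    (hconc : Concise T) {X : ∀ l, W l →ₗ[k] W l} (hX : X ∈ centroid T)
    {j : Fin d} (hj : X j = 0) : X = 0 := by
  funext l
  show X l = 0
  refine endo_eq_zero fun β => ?_
  refine hconc l ((X l).dualMap β) ?_
  intro γ hγ
  have h := hX l j (Function.update γ l β)
  simp only [Function.update_self, Function.update_idem] at h
  rw [← hγ, Function.update_eq_self] at h
  have h0 : (X j).dualMap ((Function.update γ l β) j) = 0 := by
    rw [hj]; ext w; simp
  rw [h0] at h
  rw [h, T.map_coord_zero (i := j) (Function.update_self j 0 _)]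

/-- Injectivity of `X ↦ α ∘ X_i` on the centroid, given contraction-injectivity. -/
theorem centroid_elem_eq_zero
    (T : MultilinearMap k (fun i : Fin d => Module.Dual k (W i)) k)
    (hconc : Concise T) {i j : Fin d} (hji : j ≠ i) {α : Module.Dual k (W i)}
    (hα : ContractionInjAt T i α j)
    {X : ∀ l, W l →ₗ[k] W l} (hX : X ∈ centroid T)
    (h0 : (X i).dualMap α = 0) : X = 0 := by
  have hXj : X j = 0 := by
    refine endo_eq_zero fun δ => ?_
    refine hα ((X j).dualMap δ) ?_
    intro γ hγi hγj
    have h := hX i j (Function.update γ j δ)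
    simp only [Function.update_self, Function.update_idem] at h
    rw [Function.update_of_ne hji.symm] at h
    rw [hγi, h0] at h
    rw [← hγj, Function.update_eq_self] at h
    rw [← h, T.map_coord_zero (i := i) (Function.update_self i 0 _)]
  exact eq_zero_of_slot_zero T hconc hX hXj

/-- Surjectivity of `X ↦ α ∘ X_i` implies contraction-injectivity in every slot `j ≠ i`. -/
theorem contractionInjAt_of_surjective (hd : 3 ≤ d)
    (T : MultilinearMap k (fun i : Fin d => Module.Dual k (W i)) k)
    (hconc : Concise T) {i : Fin d} {α : Module.Dual k (W i)}
    (hsurj : Function.Surjective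
      (fun X : centroid T => ((X : ∀ l, W l →ₗ[k] W l) i).dualMap α))
    {j : Fin d} (hj : j ≠ i) : ContractionInjAt T i α j := by
  intro β hβ
  obtain ⟨l, hli, hlj⟩ : ∃ l : Fin d, l ≠ i ∧ l ≠ j := exists_third hd i j
  refine hconc j β ?_
  intro γ hγj
  obtain ⟨⟨X, hX⟩, hXα⟩ := hsurj (γ i)
  simp only at hXα
  have h := hX i l (Function.update γ i α)
  simp only [Function.update_self, Function.update_idem] at h
  rw [hXα, Function.update_eq_self] at h
  rw [h]
  refine hβ _ ?_ ?_
  · rw [Function.update_of_ne hli.symm, Function.update_self]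
  · rw [Function.update_of_ne hlj.symm, Function.update_of_ne hj, hγj]

/-- **Genericity conditions.** Let `d ≥ 3`, `dim W_i = m ≥ 1`, `T` concise with
`dim Cen(T) ≥ m`, `i` an index and `α ∈ W_i^∨`. Then the following are equivalent:
(1) the contraction at `α` is injective in some slot `j ≠ i`;
(2) the contraction at `α` is injective in every slot `j ≠ i`;
(3) the linear map `Cen(T) → W_i^∨`, `X ↦ α ∘ X_i`, is surjective.
Moreover, if these hold then `dim Cen(T) = m` and the map in (3) is bijective. -/
theorem genericity_conditions
    (hd : 3 ≤ d) (m : ℕ) (hm : 1 ≤ m)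
    [∀ i, FiniteDimensional k (W i)] (hdim : ∀ i, Module.finrank k (W i) = m)
    (T : MultilinearMap k (fun i : Fin d => Module.Dual k (W i)) k)
    (hconc : Concise T) (hcen : m ≤ Module.finrank k (centroid T))
    (i : Fin d) (α : Module.Dual k (W i)) :
    ((∃ j, j ≠ i ∧ ContractionInjAt T i α j) ↔ (∀ j, j ≠ i → ContractionInjAt T i α j)) ∧
    ((∃ j, j ≠ i ∧ ContractionInjAt T i α j) ↔
      Function.Surjective
        (fun X : centroid T => ((X : ∀ l, W l →ₗ[k] W l) i).dualMap α)) ∧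
    ((∃ j, j ≠ i ∧ ContractionInjAt T i α j) →
      Module.finrank k (centroid T) = m ∧
      Function.Bijective
        (fun X : centroid T => ((X : ∀ l, W l →ₗ[k] W l) i).dualMap α)) := by
  classical
  set Φ : centroid T →ₗ[k] Module.Dual k (W i) :=
    { toFun := fun X => ((X : ∀ l, W l →ₗ[k] W l) i).dualMap α
      map_add' := fun X Y => by ext w; simp
      map_smul' := fun c X => by ext w; simp } with hΦ
  have hΦapp : (fun X : centroid T => ((X : ∀ l, W l →ₗ[k] W l) i).dualMap α) = ⇑Φ := rfl
  have hdualrank : Module.finrank k (Module.Dual k (W i)) = m := by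
    rw [Subspace.dual_finrank_eq, hdim i]
  have hinjective : (∃ j, j ≠ i ∧ ContractionInjAt T i α j) → Function.Injective Φ := by
    rintro ⟨j, hj, hja⟩
    refine (injective_iff_map_eq_zero Φ).mpr fun X h0 => ?_
    exact Subtype.ext (centroid_elem_eq_zero T hconc hj hja X.2 h0)
  have hrank : Function.Injective Φ → Module.finrank k (centroid T) = m := by
    intro hinj
    have hle := LinearMap.finrank_le_finrank_of_injective hinj
    omega
  have hbij : Function.Injective Φ → Function.Bijective Φ := by
    intro hinj
    refine ⟨hinj, ?_⟩
    exact (LinearMap.injective_iff_surjective_of_finrank_eq_finrank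
      (by rw [hrank hinj, hdualrank])).mp hinj
  have hforward : (∃ j, j ≠ i ∧ ContractionInjAt T i α j) →
      Function.Surjective Φ := fun h => (hbij (hinjective h)).2
  have hback : Function.Surjective Φ → ∀ j, j ≠ i → ContractionInjAt T i α j := by
    intro hs j hj
    exact contractionInjAt_of_surjective hd T hconc (hΦapp ▸ hs) hj
  obtain ⟨j₀, hj₀, -⟩ : ∃ l : Fin d, l ≠ i ∧ l ≠ i := exists_third hd i i
  refine ⟨⟨fun h => hback (hforward h), fun h => ⟨j₀, hj₀, h j₀ hj₀⟩⟩,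
    ⟨hforward, fun hs => ⟨j₀, hj₀, hback (hΦapp ▸ hs) j₀ hj₀⟩⟩,
    fun h => ⟨hrank (hinjective h), hbij (hinjective h)⟩⟩

end Stmt12
end

section
/- (Lemma: fiberwise injectivity of maps of free modules over a local ring.) Let A be a commutative local ring with maximal ideal m, let M and N be finitely generated free A-modules, and let f : M → N be an A-linear map such that the induced (A/m)-linear map M/mM → N/mN is injective. Then f is injective and the cokernel N/f(M) is a free A-module. -/
/-!
Statement 15: fiberwise injectivity of maps of free modules over a local ring.
-/

namespace Stmt15

/-- **Fiberwise injectivity over a local ring.** Let `A` be a commutative local ring with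
maximal ideal `𝔪`, let `M` and `N` be finitely generated free `A`-modules, and let
`f : M → N` be `A`-linear such that the induced map `M/𝔪M → N/𝔪N` is injective (i.e.
`f x ∈ 𝔪N` implies `x ∈ 𝔪M`). Then `f` is injective and `N / f(M)` is a free
`A`-module. -/
theorem injective_and_free_cokernel_of_fiberwise_injective
    (A : Type*) [CommRing A] [IsLocalRing A]
    (M N : Type*) [AddCommGroup M] [Module A M] [AddCommGroup N] [Module A N]
    [Module.Free A M] [Module.Finite A M] [Module.Free A N] [Module.Finite A N]
    (f : M →ₗ[A] N)
    (hf : ∀ x : M,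
      f x ∈ (IsLocalRing.maximalIdeal A) • (⊤ : Submodule A N) →
      x ∈ (IsLocalRing.maximalIdeal A) • (⊤ : Submodule A M)) :
    Function.Injective f ∧ Module.Free A (N ⧸ LinearMap.range f) := by
  set 𝔪 := IsLocalRing.maximalIdeal A
  set k := IsLocalRing.ResidueField A
  -- The induced map on quotients
  have hle : (𝔪 • ⊤ : Submodule A M).map f ≤ (𝔪 • ⊤ : Submodule A N) := by
    rw [Submodule.map_smul'']
    exact Submodule.smul_mono le_rfl le_top
  set fbar : (M ⧸ (𝔪 • ⊤ : Submodule A M)) →ₗ[A] (N ⧸ (𝔪 • ⊤ : Submodule A N)) :=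
    Submodule.mapQ _ _ f (Submodule.map_le_iff_le_comap.mp hle)
  have hfbar : Function.Injective fbar := by
    rw [← LinearMap.ker_eq_bot, eq_bot_iff]
    rintro x hx
    obtain ⟨x, rfl⟩ := Submodule.mkQ_surjective _ x
    simp only [LinearMap.mem_ker, fbar, Submodule.mkQ_apply, Submodule.mapQ_apply,
      Submodule.Quotient.mk_eq_zero] at hx
    simpa [Submodule.Quotient.mk_eq_zero] using hf x hx
  -- The commuting square with `quotTensorEquivQuotSMul`
  have hsquare : ∀ z : TensorProduct A k M,
      (TensorProduct.quotTensorEquivQuotSMul N 𝔪) (f.lTensor k z) =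
        fbar ((TensorProduct.quotTensorEquivQuotSMul M 𝔪) z) := by
    intro z
    have : ((TensorProduct.quotTensorEquivQuotSMul N 𝔪).toLinearMap ∘ₗ f.lTensor k) =
        (fbar ∘ₗ (TensorProduct.quotTensorEquivQuotSMul M 𝔪).toLinearMap) := by
      apply TensorProduct.ext'
      intro r x
      obtain ⟨r, rfl⟩ := Ideal.Quotient.mk_surjective (I := 𝔪) r
      show (TensorProduct.quotTensorEquivQuotSMul N 𝔪)
          (Ideal.Quotient.mk 𝔪 r ⊗ₜ[A] f x) = fbar
          ((TensorProduct.quotTensorEquivQuotSMul M 𝔪) (Ideal.Quotient.mk 𝔪 r ⊗ₜ[A] x))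
      rw [TensorProduct.quotTensorEquivQuotSMul_mk_tmul,
        TensorProduct.quotTensorEquivQuotSMul_mk_tmul]
      simp [fbar, map_smul]
    exact DFunLike.congr_fun this z
  have hinj : Function.Injective (f.lTensor k) := by
    intro a b hab
    apply (TensorProduct.quotTensorEquivQuotSMul M 𝔪).injective
    apply hfbar
    rw [← hsquare, ← hsquare, hab]
  constructor
  · obtain ⟨l', hl'⟩ :=
      (IsLocalRing.split_injective_iff_lTensor_residueField_injective f).mpr hinj
    exact Function.HasLeftInverse.injective ⟨l', DFunLike.congr_fun hl'⟩
  · exact Module.free_of_lTensor_residueField_injective f (LinearMap.range f).mkQ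
      (Submodule.mkQ_surjective _) f.exact_map_mkQ_range hinj

end Stmt15
end
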